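/- arXiv:2002.01878 — 4 statements merged into one kernel-verified Lean document; each statement's English description precedes it below -/
import Mathlib

section
/- Let d : D × D → ℝ≥0 be symmetric with d(x,x) = 0 and d(x_i,x_j) > 0 for i ≠ j on a finite dataset x₁,…,x_N. Then there exists σ_PSD > 0 such that for all 0 < σ ≤ σ_PSD, the matrix K_σ = [exp(−d(x_i,x_j)²/(2σ²))] is positive semidefinite. -/
theorem exists_sigma_psd {D : Type*} (N : ℕ) (x : Fin N → D) (d : D → D → ℝ)
    (hsymm : ∀ a b, d a b = d b a) (hnonneg : ∀ a b, 0 ≤ d a b)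
    (hdiag : ∀ a, d a a = 0)
    (hpos : ∀ i j : Fin N, i ≠ j → 0 < d (x i) (x j)) :
    ∃ σPSD > (0 : ℝ), ∀ σ : ℝ, 0 < σ → σ ≤ σPSD →
      (Matrix.of fun i j =>
        Real.exp (-(d (x i) (x j)) ^ 2 / (2 * σ ^ 2)) : Matrix (Fin N) (Fin N) ℝ).PosSemidef := by
  obtain ⟨δ, hδpos, hδle⟩ : ∃ δ : ℝ, 0 < δ ∧ ∀ i j : Fin N, i ≠ j → δ ≤ (d (x i) (x j)) ^ 2 := by
    rcases isEmpty_or_nonempty {p : Fin N × Fin N // p.1 ≠ p.2} with he | hne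
    · exact ⟨1, one_pos, fun i j hij => (he.false ⟨(i, j), hij⟩).elim⟩
    · obtain ⟨a, ha⟩ := Finite.exists_min
        (fun p : {p : Fin N × Fin N // p.1 ≠ p.2} => (d (x p.1.1) (x p.1.2)) ^ 2)
      exact ⟨_, pow_pos (hpos _ _ a.2) 2, fun i j hij => ha ⟨(i, j), hij⟩⟩
  have hNnn : (0:ℝ) ≤ (N:ℝ) := Nat.cast_nonneg N
  have hN2 : (0:ℝ) < (N:ℝ) + 2 := by linarith
  have hlog : 0 < Real.log ((N:ℝ) + 2) := Real.log_pos (by linarith)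
  refine ⟨Real.sqrt (δ / (2 * Real.log ((N:ℝ) + 2))), Real.sqrt_pos.mpr (by positivity), ?_⟩
  intro σ hσ hσle
  have hσ2pos : 0 < σ ^ 2 := by positivity
  have hσ2 : σ ^ 2 ≤ δ / (2 * Real.log ((N:ℝ) + 2)) := by
    have h := Real.sq_sqrt (show (0:ℝ) ≤ δ / (2 * Real.log ((N:ℝ) + 2)) by positivity)
    calc σ ^ 2 ≤ Real.sqrt (δ / (2 * Real.log ((N:ℝ) + 2))) ^ 2 :=
          pow_le_pow_left₀ hσ.le hσle 2
      _ = δ / (2 * Real.log ((N:ℝ) + 2)) := h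
  have hε : Real.exp (-(δ / (2 * σ ^ 2))) ≤ 1 / ((N:ℝ) + 2) := by
    have h1 : Real.log ((N:ℝ) + 2) ≤ δ / (2 * σ ^ 2) := by
      rw [le_div_iff₀ (by positivity)]
      have h2 : Real.log ((N:ℝ)+2) * (2 * (δ / (2 * Real.log ((N:ℝ)+2)))) = δ := by
        field_simp
      nlinarith
    have h3 := Real.exp_le_exp.mpr (neg_le_neg h1)
    calc Real.exp (-(δ / (2 * σ ^ 2))) ≤ Real.exp (-Real.log ((N:ℝ) + 2)) := h3
      _ = 1 / ((N:ℝ) + 2) := by rw [Real.exp_neg, Real.exp_log hN2, one_div]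
  refine Matrix.posSemidef_iff_dotProduct_mulVec.mpr ⟨?_, ?_⟩
  · ext i j
    simp only [Matrix.conjTranspose_apply, Matrix.of_apply, star_trivial]
    rw [hsymm (x j) (x i)]
  · intro c
    have key : ∀ i j : Fin N, i ≠ j →
        -((1 / ((N:ℝ) + 2)) * (|c i| * |c j|)) ≤
          c i * (Real.exp (-(d (x i) (x j)) ^ 2 / (2 * σ ^ 2)) * c j) := by
      intro i j hij
      set e := Real.exp (-(d (x i) (x j)) ^ 2 / (2 * σ ^ 2)) with hedef
      have hepos : 0 < e := Real.exp_pos _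
      have he1 : e ≤ 1 / ((N:ℝ) + 2) := by
        refine le_trans ?_ hε
        apply Real.exp_le_exp.mpr
        rw [neg_div]
        exact neg_le_neg ((div_le_div_iff_of_pos_right (by positivity)).mpr (hδle i j hij))
      have h4 : |c i * (e * c j)| = e * (|c i| * |c j|) := by
        rw [abs_mul, abs_mul, abs_of_pos hepos]; ring
      have h5 := neg_abs_le (c i * (e * c j))
      have h6 : e * (|c i| * |c j|) ≤ (1 / ((N:ℝ) + 2)) * (|c i| * |c j|) :=
        mul_le_mul_of_nonneg_right he1 (mul_nonneg (abs_nonneg _) (abs_nonneg _))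
      rw [h4] at h5
      linarith
    have hdot : dotProduct (star c) ((Matrix.of fun i j =>
          Real.exp (-(d (x i) (x j)) ^ 2 / (2 * σ ^ 2)) : Matrix (Fin N) (Fin N) ℝ).mulVec c)
        = ∑ i, ∑ j, c i * (Real.exp (-(d (x i) (x j)) ^ 2 / (2 * σ ^ 2)) * c j) := by
      simp [dotProduct, Matrix.mulVec, Finset.mul_sum]
    have hsplit : ∀ i : Fin N,
        ∑ j, c i * (Real.exp (-(d (x i) (x j)) ^ 2 / (2 * σ ^ 2)) * c j)
        = c i ^ 2 + ∑ j ∈ Finset.univ.erase i,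
            c i * (Real.exp (-(d (x i) (x j)) ^ 2 / (2 * σ ^ 2)) * c j) := by
      intro i
      rw [← Finset.add_sum_erase Finset.univ _ (Finset.mem_univ i)]
      congr 1
      rw [hdiag (x i)]
      norm_num [Real.exp_zero]
      ring
    have hlow : ∀ i : Fin N,
        c i ^ 2 - (1 / ((N:ℝ) + 2)) * (|c i| * ∑ j, |c j|)
        ≤ ∑ j, c i * (Real.exp (-(d (x i) (x j)) ^ 2 / (2 * σ ^ 2)) * c j) := by
      intro i
      rw [hsplit i]
      have h7 : ∑ j ∈ Finset.univ.erase i, -((1 / ((N:ℝ) + 2)) * (|c i| * |c j|))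
          ≤ ∑ j ∈ Finset.univ.erase i,
              c i * (Real.exp (-(d (x i) (x j)) ^ 2 / (2 * σ ^ 2)) * c j) := by
        apply Finset.sum_le_sum
        intro j hj
        exact key i j (fun h => (Finset.mem_erase.mp hj).1 h.symm)
      have h8 : ∑ j ∈ Finset.univ.erase i, (1 / ((N:ℝ) + 2)) * (|c i| * |c j|)
          ≤ ∑ j, (1 / ((N:ℝ) + 2)) * (|c i| * |c j|) :=
        Finset.sum_le_sum_of_subset_of_nonneg (Finset.erase_subset _ _)
          (fun j _ _ => by positivity)
      have h9 : ∑ j, (1 / ((N:ℝ) + 2)) * (|c i| * |c j|)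
          = (1 / ((N:ℝ) + 2)) * (|c i| * ∑ j, |c j|) := by
        simp only [Finset.mul_sum]
      rw [Finset.sum_neg_distrib] at h7
      linarith
    have hQ : ∑ i, (c i ^ 2 - (1 / ((N:ℝ) + 2)) * (|c i| * ∑ j, |c j|))
        ≤ ∑ i, ∑ j, c i * (Real.exp (-(d (x i) (x j)) ^ 2 / (2 * σ ^ 2)) * c j) :=
      Finset.sum_le_sum fun i _ => hlow i
    have hCS : (∑ i, |c i|) ^ 2 ≤ (N:ℝ) * ∑ i, c i ^ 2 := by
      have := Finset.sum_mul_sq_le_sq_mul_sq Finset.univ (fun _ : Fin N => (1:ℝ))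
        (fun i => |c i|)
      simp only [one_mul, one_pow, sq_abs] at this
      simpa [Finset.sum_const, Finset.card_univ, mul_comm] using this
    have hs : 0 ≤ ∑ i, c i ^ 2 := Finset.sum_nonneg fun i _ => sq_nonneg _
    have hsum : ∑ i, (c i ^ 2 - (1 / ((N:ℝ) + 2)) * (|c i| * ∑ j, |c j|))
        = (∑ i, c i ^ 2) - (1 / ((N:ℝ) + 2)) * (∑ i, |c i|) ^ 2 := by
      rw [Finset.sum_sub_distrib, ← Finset.mul_sum, ← Finset.sum_mul]
      ring
    rw [hdot]
    rw [hsum] at hQ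
    have hfin : (0:ℝ) ≤ (∑ i, c i ^ 2) - (1 / ((N:ℝ) + 2)) * (∑ i, |c i|) ^ 2 := by
      have h10 : (1 / ((N:ℝ) + 2)) * (∑ i, |c i|) ^ 2
          ≤ (1 / ((N:ℝ) + 2)) * ((N:ℝ) * ∑ i, c i ^ 2) :=
        mul_le_mul_of_nonneg_left hCS (by positivity)
      have h11 : (1 / ((N:ℝ) + 2)) * ((N:ℝ) * ∑ i, c i ^ 2) ≤ ∑ i, c i ^ 2 := by
        rw [div_mul_eq_mul_div, one_mul, div_le_iff₀ hN2]
        nlinarith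
      linarith
    linarith
end

section
/- Let f : X × X → ℝ be symmetric with f(x,x) = 0, and suppose that for every finite family x₁,…,x_n ∈ X and every c ∈ ℝⁿ with Σ c_i = 0, Σ_{i,j} c_i c_j f(x_i,x_j) ≤ 0 (f is conditionally negative semidefinite). Then for every t > 0 the kernel k_t(x,y) = exp(−t f(x,y)) is positive semidefinite: for all x₁,…,x_n and all c ∈ ℝⁿ, Σ_{i,j} c_i c_j exp(−t f(x_i,x_j)) ≥ 0. -/
open Finset

namespace SchoenbergAux

variable {n : ℕ}

lemma quadform_nonneg {M : Matrix (Fin n) (Fin n) ℝ} (hM : M.PosSemidef) (v : Fin n → ℝ) :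
    0 ≤ ∑ i, ∑ j, v i * v j * M i j := by
  have h := hM.dotProduct_mulVec_nonneg v
  simp only [star_trivial, dotProduct, Matrix.mulVec] at h
  calc (0:ℝ) ≤ ∑ i, v i * ∑ j, M i j * v j := h
    _ = ∑ i, ∑ j, v i * v j * M i j := by
        refine Finset.sum_congr rfl fun i _ => ?_
        rw [Finset.mul_sum]
        exact Finset.sum_congr rfl fun j _ => by ring

lemma posSemidef_of_quadform {M : Matrix (Fin n) (Fin n) ℝ}
    (hsym : ∀ i j, M i j = M j i)
    (h : ∀ v : Fin n → ℝ, 0 ≤ ∑ i, ∑ j, v i * v j * M i j) : M.PosSemidef := by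
  refine Matrix.PosSemidef.of_dotProduct_mulVec_nonneg ?_ ?_
  · ext i j
    simp [Matrix.conjTranspose_apply, hsym i j]
  · intro v
    have := h v
    simp only [star_trivial, dotProduct, Matrix.mulVec]
    calc (0:ℝ) ≤ ∑ i, ∑ j, v i * v j * M i j := this
      _ = ∑ i, v i * ∑ j, M i j * v j := by
          refine Finset.sum_congr rfl fun i _ => ?_
          rw [Finset.mul_sum]
          exact Finset.sum_congr rfl fun j _ => by ring

lemma schur {M N : Matrix (Fin n) (Fin n) ℝ} (hM : M.PosSemidef) (hN : N.PosSemidef) :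
    Matrix.PosSemidef (Matrix.of fun i j => M i j * N i j) := by
  obtain ⟨B, hB⟩ : ∃ B : Matrix (Fin n) (Fin n) ℝ, M = B.conjTranspose * B := by
    open scoped MatrixOrder in exact CStarAlgebra.nonneg_iff_eq_star_mul_self.mp hM.nonneg
  have hMe : ∀ i j, M i j = ∑ r, B r i * B r j := by
    intro i j
    rw [hB]
    simp [Matrix.mul_apply, Matrix.conjTranspose_apply]
  have hNs : ∀ i j, N i j = N j i := by
    intro i j
    have := congrFun (congrFun hN.1 i) j
    simpa [Matrix.conjTranspose_apply] using this.symm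
  have hMs : ∀ i j, M i j = M j i := by
    intro i j
    have := congrFun (congrFun hM.1 i) j
    simpa [Matrix.conjTranspose_apply] using this.symm
  refine posSemidef_of_quadform (fun i j => by simp [hMs i j, hNs i j]) ?_
  intro v
  have key : ∀ r : Fin n, 0 ≤ ∑ i, ∑ j, (v i * B r i) * (v j * B r j) * N i j :=
    fun r => quadform_nonneg hN (fun i => v i * B r i)
  have calc1 : ∑ r, ∑ i, ∑ j, (v i * B r i) * (v j * B r j) * N i j
      = ∑ i, ∑ j, v i * v j * (Matrix.of fun i j => M i j * N i j) i j := by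
    rw [Finset.sum_comm]
    refine Finset.sum_congr rfl fun i _ => ?_
    rw [Finset.sum_comm]
    refine Finset.sum_congr rfl fun j _ => ?_
    simp only [Matrix.of_apply, hMe i j, Finset.sum_mul, Finset.mul_sum]
    exact Finset.sum_congr rfl fun r _ => by ring
  rw [← calc1]
  exact Finset.sum_nonneg fun r _ => key r

lemma psd_pow {M : Matrix (Fin n) (Fin n) ℝ} (hM : M.PosSemidef) (k : ℕ) :
    Matrix.PosSemidef (Matrix.of fun i j => M i j ^ k) := by
  induction k with
  | zero =>
    refine posSemidef_of_quadform (fun i j => by simp) ?_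
    intro v
    have : ∑ i, ∑ j, v i * v j * (Matrix.of fun i j : Fin n => M i j ^ 0) i j
        = (∑ i, v i) * (∑ j, v j) := by
      rw [Finset.sum_mul]
      refine Finset.sum_congr rfl fun i _ => ?_
      rw [Finset.mul_sum]
      simp
    rw [this]
    exact mul_self_nonneg _
  | succ k ih =>
    have := schur hM ih
    have heq : (Matrix.of fun i j => M i j * (Matrix.of fun i j : Fin n => M i j ^ k) i j)
        = (Matrix.of fun i j => M i j ^ (k+1)) := by
      ext i j
      simp [pow_succ, mul_comm]
    rw [heq] at this
    exact this

lemma exp_quadform {M : Matrix (Fin n) (Fin n) ℝ} (hM : M.PosSemidef) (d : Fin n → ℝ) :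
    0 ≤ ∑ i, ∑ j, d i * d j * Real.exp (M i j) := by
  have expser : ∀ y : ℝ, Real.exp y = ∑' k : ℕ, y ^ k / (Nat.factorial k : ℝ) := by
    intro y
    rw [Real.exp_eq_exp_ℝ]
    exact congrFun (NormedSpace.exp_eq_tsum_div) y
  set F : Fin n × Fin n → ℕ → ℝ :=
    fun p k => d p.1 * d p.2 * (M p.1 p.2 ^ k / (Nat.factorial k : ℝ)) with hF
  have hsum : ∀ p ∈ Finset.univ (α := Fin n × Fin n), Summable (F p) :=
    fun p _ => (Real.summable_pow_div_factorial (M p.1 p.2)).mul_left _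
  have step1 : ∑ i, ∑ j, d i * d j * Real.exp (M i j)
      = ∑ p : Fin n × Fin n, ∑' k : ℕ, F p k := by
    rw [← Finset.sum_product']
    refine Finset.sum_congr rfl fun p _ => ?_
    rw [hF]
    rw [expser, ← tsum_mul_left]
  have step2 : ∑ p : Fin n × Fin n, ∑' k : ℕ, F p k = ∑' k : ℕ, ∑ p : Fin n × Fin n, F p k :=
    (Summable.tsum_finsetSum hsum).symm
  rw [step1, step2]
  refine tsum_nonneg fun k => ?_
  rw [hF]
  have : ∑ p : Fin n × Fin n, (fun p k => d p.1 * d p.2 * (M p.1 p.2 ^ k / (Nat.factorial k : ℝ))) p k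
      = (∑ i, ∑ j, d i * d j * (Matrix.of fun i j => M i j ^ k) i j) / (Nat.factorial k : ℝ) := by
    rw [← Finset.sum_product', Finset.sum_div]
    refine Finset.sum_congr rfl fun p _ => ?_
    simp only [Matrix.of_apply]
    ring
  rw [this]
  exact div_nonneg (quadform_nonneg (psd_pow hM k) d) (by positivity)

end SchoenbergAux

namespace SchoenbergAux

lemma sum_pair_split {m : ℕ} (F : Fin (m + 2) → Fin (m + 2) → ℝ) :
    ∑ i, ∑ j, F i j = F 0 0 + ∑ j : Fin (m+1), F 0 j.succ + ∑ i : Fin (m+1), F i.succ 0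
      + ∑ i : Fin (m+1), ∑ j : Fin (m+1), F i.succ j.succ := by
  rw [Fin.sum_univ_succ]
  have h0 : ∑ j : Fin (m+2), F 0 j = F 0 0 + ∑ j : Fin (m+1), F 0 j.succ :=
    Fin.sum_univ_succ _
  have hi : ∀ i : Fin (m+1), ∑ j : Fin (m+2), F i.succ j
      = F i.succ 0 + ∑ j : Fin (m+1), F i.succ j.succ := fun i => Fin.sum_univ_succ _
  rw [h0]
  rw [Finset.sum_congr rfl fun i _ => hi i, Finset.sum_add_distrib]
  ring

end SchoenbergAux

theorem schoenberg_forward {X : Type*} (f : X → X → ℝ)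
    (hsymm : ∀ x y, f x y = f y x) (hdiag : ∀ x, f x x = 0)
    (hcnd : ∀ (n : ℕ) (x : Fin n → X) (c : Fin n → ℝ), (∑ i, c i) = 0 →
      ∑ i, ∑ j, c i * c j * f (x i) (x j) ≤ 0) :
    ∀ t : ℝ, 0 < t → ∀ (n : ℕ) (x : Fin n → X) (c : Fin n → ℝ),
      0 ≤ ∑ i, ∑ j, c i * c j * Real.exp (-t * f (x i) (x j)) := by
  intro t ht n x c
  cases n with
  | zero => simp
  | succ m =>
    set z : X := x 0 with hz
    set a : Fin (m+1) → ℝ := fun i => f (x i) z with ha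
    set M : Matrix (Fin (m+1)) (Fin (m+1)) ℝ :=
      Matrix.of (fun i j => t * (a i + a j - f (x i) (x j))) with hM
    have hMpsd : M.PosSemidef := by
      refine SchoenbergAux.posSemidef_of_quadform ?_ ?_
      · intro i j
        simp only [hM, Matrix.of_apply, ha]
        rw [hsymm (x i) (x j)]
        ring
      · intro v
        set s : ℝ := ∑ i, v i with hs
        set S1 : ℝ := ∑ i, v i * a i with hS1
        set S2 : ℝ := ∑ i, ∑ j, v i * v j * f (x i) (x j) with hS2
        have h' := hcnd (m+2) (Fin.cons z x) (Fin.cons (-s) v)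
          (by rw [Fin.sum_cons, hs]; ring)
        rw [SchoenbergAux.sum_pair_split] at h'
        simp only [Fin.cons_zero, Fin.cons_succ, hdiag z, mul_zero] at h'
        have e0 : -(s * S1) = ∑ j : Fin (m+1), -s * v j * f z (x j) := by
          rw [hS1, Finset.mul_sum, ← Finset.sum_neg_distrib]
          refine Finset.sum_congr rfl fun j _ => ?_
          simp only [ha]
          rw [hsymm z (x j)]
          ring
        have e1 : -(s * S1) = ∑ i : Fin (m+1), v i * -s * f (x i) z := by
          rw [hS1, Finset.mul_sum, ← Finset.sum_neg_distrib]
          refine Finset.sum_congr rfl fun i _ => ?_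
          simp only [ha]
          ring
        rw [← e0, ← e1] at h'
        have h2 : S2 ≤ 2 * (s * S1) := by rw [hS2]; linarith
        have inner : ∀ i, t * (v i * a i) * s + t * v i * S1
            - t * (∑ j, v i * v j * f (x i) (x j)) = ∑ j, v i * v j * M i j := by
          intro i
          rw [hs, hS1, Finset.mul_sum, Finset.mul_sum, Finset.mul_sum,
            ← Finset.sum_add_distrib, ← Finset.sum_sub_distrib]
          refine Finset.sum_congr rfl fun j _ => ?_
          simp only [hM, Matrix.of_apply]
          ring
        have equad2 : ∑ i, (t * (v i * a i) * s + t * v i * S1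
            - t * (∑ j, v i * v j * f (x i) (x j))) = t * (2 * (s * S1) - S2) := by
          rw [Finset.sum_sub_distrib, Finset.sum_add_distrib, ← Finset.sum_mul,
            ← Finset.sum_mul, ← Finset.mul_sum, ← Finset.mul_sum, ← Finset.mul_sum,
            hs, hS1, hS2]
          ring
        have equad : ∑ i, ∑ j, v i * v j * M i j = t * (2 * (s * S1) - S2) :=
          (Finset.sum_congr rfl fun i _ => (inner i).symm).trans equad2
        rw [equad]
        nlinarith [h2, ht]
    set d : Fin (m+1) → ℝ := fun i => c i * Real.exp (-t * a i) with hd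
    have expsplit : ∀ i j, Real.exp (-t * f (x i) (x j))
        = Real.exp (-t * a i) * Real.exp (-t * a j) * Real.exp (M i j) := by
      intro i j
      rw [← Real.exp_add, ← Real.exp_add]
      congr 1
      simp only [hM, Matrix.of_apply, ha]
      ring
    have key : ∑ i, ∑ j, c i * c j * Real.exp (-t * f (x i) (x j))
        = ∑ i, ∑ j, d i * d j * Real.exp (M i j) := by
      refine Finset.sum_congr rfl fun i _ => Finset.sum_congr rfl fun j _ => ?_
      rw [expsplit i j]
      simp only [hd]
      ring
    rw [key]
    exact SchoenbergAux.exp_quadform hMpsd d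
end

section
/- Conversely, if exp(−t f(x,y)) is a positive semidefinite kernel for all t > 0, where f is symmetric with f(x,x)=0, then f is conditionally negative semidefinite: for all x₁,…,x_n and all c ∈ ℝⁿ with Σ c_i = 0, Σ_{i,j} c_i c_j f(x_i,x_j) ≤ 0. -/
theorem schoenberg_converse {X : Type*} (f : X → X → ℝ)
    (hsymm : ∀ x y, f x y = f y x) (hdiag : ∀ x, f x x = 0)
    (hpsd : ∀ t : ℝ, 0 < t → ∀ (n : ℕ) (x : Fin n → X) (c : Fin n → ℝ),
      0 ≤ ∑ i, ∑ j, c i * c j * Real.exp (-t * f (x i) (x j))) :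
    ∀ (n : ℕ) (x : Fin n → X) (c : Fin n → ℝ), (∑ i, c i) = 0 →
      ∑ i, ∑ j, c i * c j * f (x i) (x j) ≤ 0 := by
  intro n x c hc
  set g : ℝ → ℝ := fun t => ∑ i, ∑ j, c i * c j * (1 - Real.exp (-t * f (x i) (x j))) / t
    with hg
  -- the limit of g as t → 0⁺ is the target sum
  have hlim : Filter.Tendsto g (nhdsWithin 0 (Set.Ioi 0))
      (nhds (∑ i, ∑ j, c i * c j * f (x i) (x j))) := by
    apply tendsto_finset_sum
    intro i _
    apply tendsto_finset_sum
    intro j _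
    have hd : HasDerivAt (fun t : ℝ => c i * c j * (1 - Real.exp (-t * f (x i) (x j))))
        (c i * c j * f (x i) (x j)) 0 := by
      have h1 : HasDerivAt (fun t : ℝ => -t * f (x i) (x j)) (-(f (x i) (x j))) 0 := by
        simpa using ((hasDerivAt_id (0:ℝ)).neg.mul_const (f (x i) (x j)))
      have h2 : HasDerivAt (fun t : ℝ => Real.exp (-t * f (x i) (x j)))
          (Real.exp (-(0:ℝ) * f (x i) (x j)) * (-(f (x i) (x j)))) 0 := h1.exp
      have h3 := ((hasDerivAt_const (0:ℝ) (1:ℝ)).sub h2).const_mul (c i * c j)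
      simpa using h3
    have hslope := hasDerivAt_iff_tendsto_slope.mp hd
    have hsub : nhdsWithin (0:ℝ) (Set.Ioi 0) ≤ nhdsWithin (0:ℝ) {(0:ℝ)}ᶜ :=
      nhdsWithin_mono _ (fun t ht => ne_of_gt ht)
    have := hslope.mono_left hsub
    apply this.congr'
    filter_upwards [self_mem_nhdsWithin] with t ht
    have ht0 : t ≠ 0 := ne_of_gt ht
    simp [slope, ht0, div_eq_inv_mul, mul_comm]
  -- g t ≤ 0 for t > 0
  have hneg : ∀ t : ℝ, 0 < t → g t ≤ 0 := by
    intro t ht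
    have h1 : g t = (∑ i, ∑ j, c i * c j - ∑ i, ∑ j, c i * c j * Real.exp (-t * f (x i) (x j))) / t := by
      rw [hg]
      rw [← Finset.sum_sub_distrib, Finset.sum_div]
      apply Finset.sum_congr rfl
      intro i _
      rw [← Finset.sum_sub_distrib, Finset.sum_div]
      apply Finset.sum_congr rfl
      intro j _
      ring
    have h2 : (∑ i, ∑ j, c i * c j) = 0 := by
      have : (∑ i, ∑ j, c i * c j) = (∑ i, c i) * (∑ j, c j) := by
        rw [Finset.sum_mul]
        apply Finset.sum_congr rfl
        intro i _
        rw [Finset.mul_sum]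
      rw [this, hc, zero_mul]
    rw [h1, h2]
    apply div_nonpos_of_nonpos_of_nonneg _ ht.le
    simpa using hpsd t ht n x c
  exact le_of_tendsto hlim (Filter.eventually_of_mem self_mem_nhdsWithin fun t ht => hneg t ht)
end

section
/- Let y₁ ≤ … ≤ y_n and z₁ ≤ … ≤ z_n be real numbers and p ≥ 1. For any permutation τ of {1,…,n}, Σ_i |y_i − z_{τ(i)}|^p ≥ Σ_i |y_i − z_i|^p. -/
open Finset

lemma abs_rpow_convexOn (p : ℝ) (hp : 1 ≤ p) :
    ConvexOn ℝ Set.univ (fun x : ℝ => |x| ^ p) := by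
  have himg : abs '' Set.univ = Set.Ici (0 : ℝ) := by
    ext x
    constructor
    · rintro ⟨y, -, rfl⟩; exact abs_nonneg y
    · intro hx; exact ⟨x, trivial, abs_of_nonneg hx⟩
  have hg : ConvexOn ℝ (abs '' Set.univ) (fun x : ℝ => x ^ p) := by
    rw [himg]; exact convexOn_rpow hp
  have hmono : MonotoneOn (fun x : ℝ => x ^ p) (abs '' Set.univ) := by
    rw [himg]
    intro a ha b _ hab
    exact Real.rpow_le_rpow ha hab (le_trans zero_le_one hp)
  have habs : ConvexOn ℝ Set.univ (abs : ℝ → ℝ) := by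
    have h := convexOn_univ_norm (E := ℝ)
    have e : (norm : ℝ → ℝ) = abs := funext Real.norm_eq_abs
    rw [e] at h
    exact h
  exact hg.comp habs hmono

lemma convex_four {f : ℝ → ℝ} (hf : ConvexOn ℝ Set.univ f) {m x y M : ℝ}
    (h1 : m ≤ x) (h2 : x ≤ M) (h3 : m ≤ y) (hsum : x + y = m + M) :
    f x + f y ≤ f m + f M := by
  rcases eq_or_lt_of_le (h1.trans h2) with h | hmM
  · have hx : x = m := le_antisymm (h ▸ h2) h1
    have hy : y = m := by linarith
    rw [hx, hy, ← h]
  · set t : ℝ := (M - x) / (M - m) with ht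
    have hMm : (0 : ℝ) < M - m := by linarith
    have ht0 : 0 ≤ t := div_nonneg (by linarith) hMm.le
    have ht1 : t ≤ 1 := (div_le_one hMm).mpr (by linarith)
    have hx' : x = t • m + (1 - t) • M := by
      have h' : t * (M - m) = M - x := by rw [ht]; exact div_mul_cancel₀ _ hMm.ne'
      simp only [smul_eq_mul]
      linear_combination h'
    have hy' : y = (1 - t) • m + t • M := by
      have : y = m + M - x := by linarith
      rw [this, hx']
      simp [smul_eq_mul]
      ring
    have hfx : f x ≤ t * f m + (1 - t) * f M := by
      rw [hx']
      exact hf.2 trivial trivial ht0 (by linarith) (by ring)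
    have hfy : f y ≤ (1 - t) * f m + t * f M := by
      rw [hy']
      exact hf.2 trivial trivial (by linarith) ht0 (by ring)
    nlinarith [hfx, hfy]

lemma monge {p : ℝ} (hp : 1 ≤ p) {a b c d : ℝ} (hab : a ≤ b) (hcd : c ≤ d) :
    |a - c| ^ p + |b - d| ^ p ≤ |a - d| ^ p + |b - c| ^ p :=
  convex_four (abs_rpow_convexOn p hp) (by linarith) (by linarith) (by linarith)
    (by ring)

lemma sorted_matching_aux (n : ℕ) (y z : Fin n → ℝ)
    (hy : Monotone y) (hz : Monotone z) (p : ℝ) (hp : 1 ≤ p) :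
    ∀ N (τ : Equiv.Perm (Fin n)), τ.support.card ≤ N →
      ∑ i, |y i - z i| ^ p ≤ ∑ i, |y i - z (τ i)| ^ p := by
  intro N
  induction N with
  | zero =>
    intro τ h
    have : τ = 1 := by
      rwa [Nat.le_zero, Equiv.Perm.card_support_eq_zero] at h
    subst this
    simp
  | succ N ih =>
    intro τ hcard
    by_cases hτ : τ = 1
    · subst hτ; simp
    · have hsupp : τ.support.Nonempty := by
        rw [Finset.nonempty_iff_ne_empty]
        intro h
        exact hτ (Equiv.Perm.support_eq_empty_iff.mp h)
      set i := τ.support.min' hsupp with hidef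
      have hi : i ∈ τ.support := Finset.min'_mem _ _
      have hτi : τ i ≠ i := Equiv.Perm.mem_support.mp hi
      set j := τ⁻¹ i with hjdef
      have hji : τ j = i := Equiv.apply_symm_apply τ i
      have hij : i ≠ j := by
        intro h
        apply hτi
        rw [h, hji]
        exact h
      have hj_supp : j ∈ τ.support := Equiv.Perm.mem_support.mpr (by rw [hji]; exact hij)
      have hij_lt : i < j := lt_of_le_of_ne (Finset.min'_le _ _ hj_supp) hij
      have hτi_supp : τ i ∈ τ.support := Equiv.Perm.apply_mem_support.mpr hi
      have hiτ_lt : i < τ i := lt_of_le_of_ne (Finset.min'_le _ _ hτi_supp) hτi.symm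
      set τ' := τ * Equiv.swap i j with hτ'def
      have hτ'i : τ' i = i := by
        rw [hτ'def, Equiv.Perm.mul_apply, Equiv.swap_apply_left, hji]
      have hτ'j : τ' j = τ i := by
        rw [hτ'def, Equiv.Perm.mul_apply, Equiv.swap_apply_right]
      have hτ'k : ∀ k, k ≠ i → k ≠ j → τ' k = τ k := by
        intro k hki hkj
        rw [hτ'def, Equiv.Perm.mul_apply, Equiv.swap_apply_of_ne_of_ne hki hkj]
      -- support decreases
      have hss : τ'.support ⊂ τ.support := by
        constructor
        · intro k hk
          rw [Equiv.Perm.mem_support] at hk ⊢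
          by_cases hki : k = i
          · exact absurd (hki ▸ hτ'i) (hki ▸ hk)
          · by_cases hkj : k = j
            · subst hkj; rw [hji]; exact hij
            · rw [← hτ'k k hki hkj]; exact hk
        · intro hsub
          have := hsub hi
          rw [Equiv.Perm.mem_support] at this
          exact this hτ'i
      have hcard' : τ'.support.card ≤ N := by
        have := Finset.card_lt_card hss
        omega
      have step1 := ih τ' hcard'
      -- compare τ' sum to τ sum
      have step2 : ∑ k, |y k - z (τ' k)| ^ p ≤ ∑ k, |y k - z (τ k)| ^ p := by
        have hjmem : j ∈ Finset.univ.erase i :=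
          Finset.mem_erase.mpr ⟨hij.symm, Finset.mem_univ j⟩
        have hsplit : ∀ g : Fin n → ℝ,
            ∑ k, g k = g i + (g j + ∑ k ∈ (Finset.univ.erase i).erase j, g k) := by
          intro g
          rw [Finset.add_sum_erase _ g hjmem, Finset.add_sum_erase _ g (Finset.mem_univ i)]
        rw [hsplit (fun k => |y k - z (τ' k)| ^ p), hsplit (fun k => |y k - z (τ k)| ^ p)]
        have heq : ∑ k ∈ (Finset.univ.erase i).erase j, |y k - z (τ' k)| ^ p
            = ∑ k ∈ (Finset.univ.erase i).erase j, |y k - z (τ k)| ^ p := by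
          apply Finset.sum_congr rfl
          intro k hk
          rw [Finset.mem_erase, Finset.mem_erase] at hk
          rw [hτ'k k hk.2.1 hk.1]
        rw [heq, hτ'i, hτ'j, hji]
        have hm := monge hp (hy hij_lt.le) (hz hiτ_lt.le)
        linarith
      exact step1.trans step2

theorem sorted_matching_optimal (n : ℕ) (y z : Fin n → ℝ)
    (hy : Monotone y) (hz : Monotone z) (p : ℝ) (hp : 1 ≤ p)
    (τ : Equiv.Perm (Fin n)) :
    ∑ i, |y i - z i| ^ p ≤ ∑ i, |y i - z (τ i)| ^ p :=
  sorted_matching_aux n y z hy hz p hp τ.support.card τ le_rfl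
end
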